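/- For M a positive integer, let N_M denote the number of open edges ⟨x,y⟩ with min(x,y) ∈ {1, …, M}. Then for every α > 0 there exists M₀ (depending on s and α) such that for all M ≥ M₀, P( N_M ≥ 2 M^{1+α} ) ≤ M^{−(1 + 3α/2)}. -/

import Mathlib

open MeasureTheory ProbabilityTheory
open scoped ENNReal

/-- The number (in `ℕ∞`) of open edges `⟨x,y⟩` with `min(x,y) ∈ {1,…,M}`; edges are
recorded as pairs `(x,y)` with `x < y`, so the condition reads `1 ≤ x ≤ M`. -/
noncomputable def edgeCountBox {Ω : Type*} (E : ℤ → ℤ → Set Ω) (M : ℕ) (ω : Ω) : ℕ∞ :=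
  {q : ℤ × ℤ | 1 ≤ q.1 ∧ q.1 ≤ (M : ℤ) ∧ q.1 < q.2 ∧ ω ∈ E q.1 q.2}.encard

section aux

lemma sq_sum_aux (R : ℕ) : ∑ d ∈ Finset.Icc 1 (R+1), (1:ℝ)/(d:ℝ)^2 ≤ 2 - 1/(R+1) := by
  induction R with
  | zero => norm_num
  | succ n ih =>
    rw [Finset.sum_Icc_succ_top (by omega : 1 ≤ n + 1 + 1)]
    have h1 : (0:ℝ) < (n:ℝ) + 1 := by positivity
    have h2 : (0:ℝ) < (n:ℝ) + 2 := by positivity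
    have key : (1:ℝ)/((n:ℝ)+2)^2 ≤ 1/((n:ℝ)+1) - 1/((n:ℝ)+2) := by
      rw [div_sub_div _ _ (ne_of_gt h1) (ne_of_gt h2)]
      rw [div_le_div_iff₀ (by positivity) (by positivity)]
      nlinarith
    push_cast
    push_cast at ih
    have e1 : ((n:ℝ)+1+1) = (n:ℝ)+2 := by ring
    rw [e1]
    linarith

lemma row_sum_le (s : ℝ) (hs : 2 < s) (R : ℕ) :
    ∑ d ∈ Finset.Icc 1 R, ((d:ℝ)) ^ (-s) ≤ 2 := by
  have h1 : ∀ d ∈ Finset.Icc 1 R, ((d:ℝ)) ^ (-s) ≤ 1/(d:ℝ)^2 := by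
    intro d hd
    rw [Finset.mem_Icc] at hd
    have hd1 : (1:ℝ) ≤ (d:ℝ) := by exact_mod_cast hd.1
    have h2 := Real.rpow_le_rpow_of_exponent_le hd1 (by linarith : -s ≤ -2)
    calc ((d:ℝ)) ^ (-s) ≤ ((d:ℝ)) ^ (-(2:ℝ)) := h2
      _ = 1/(d:ℝ)^2 := by
          rw [Real.rpow_neg (by linarith), one_div]
          congr 1
          rw [show ((2:ℝ)) = ((2:ℕ):ℝ) by norm_num, Real.rpow_natCast]
  have h2 : ∑ d ∈ Finset.Icc 1 R, (1:ℝ)/(d:ℝ)^2 ≤ 2 := by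
    match R with
    | 0 => simp
    | (n+1) =>
      have := sq_sum_aux n
      have hp : (0:ℝ) < 1/((n:ℝ)+1) := by positivity
      linarith
  calc ∑ d ∈ Finset.Icc 1 R, ((d:ℝ)) ^ (-s) ≤ ∑ d ∈ Finset.Icc 1 R, 1/(d:ℝ)^2 :=
        Finset.sum_le_sum h1
    _ ≤ 2 := h2

lemma tail_sum_le (s : ℝ) (hs : 2 < s) (R : ℕ) (hR : 1 ≤ R) :
    ∑' d : ℕ, ENNReal.ofReal (((R:ℝ) + 1 + (d:ℝ)) ^ (-s)) ≤ ENNReal.ofReal (1/(R:ℝ)) := by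
  set f : ℕ → ℝ := fun d => 1/((R:ℝ)+d) with hf
  have hR1 : (1:ℝ) ≤ (R:ℝ) := by exact_mod_cast hR
  have hterm : ∀ d : ℕ, ((R:ℝ) + 1 + (d:ℝ)) ^ (-s) ≤ f d - f (d+1) := by
    intro d
    have hd0 : (0:ℝ) ≤ (d:ℝ) := Nat.cast_nonneg d
    have hb : (1:ℝ) ≤ (R:ℝ) + 1 + (d:ℝ) := by linarith
    have h2 : ((R:ℝ) + 1 + (d:ℝ)) ^ (-s) ≤ ((R:ℝ) + 1 + (d:ℝ)) ^ (-(2:ℝ)) :=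
      Real.rpow_le_rpow_of_exponent_le hb (by linarith)
    have h3 : ((R:ℝ) + 1 + (d:ℝ)) ^ (-(2:ℝ)) = 1/((R:ℝ)+1+d)^2 := by
      rw [Real.rpow_neg (by linarith), one_div]
      congr 1
      rw [show ((2:ℝ)) = ((2:ℕ):ℝ) by norm_num, Real.rpow_natCast]
    have h4 : 1/((R:ℝ)+1+d)^2 ≤ 1/(((R:ℝ)+d)*((R:ℝ)+d+1)) := by
      apply one_div_le_one_div_of_le (by positivity)
      nlinarith
    have h5 : 1/(((R:ℝ)+d)*((R:ℝ)+d+1)) = f d - f (d+1) := by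
      simp only [hf]
      push_cast
      rw [show (R:ℝ)+((d:ℝ)+1) = (R:ℝ)+(d:ℝ)+1 from by ring]
      have ha : ((R:ℝ)+d) ≠ 0 := by positivity
      have hb' : ((R:ℝ)+d+1) ≠ 0 := by positivity
      field_simp
      ring
    linarith
  have hnn : ∀ d : ℕ, 0 ≤ f d - f (d+1) := by
    intro d
    have h0 : (0:ℝ) ≤ ((R:ℝ) + 1 + (d:ℝ)) ^ (-s) :=
      Real.rpow_nonneg (by positivity) (-s)
    linarith [hterm d]
  rw [ENNReal.tsum_eq_iSup_sum]
  apply iSup_le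
  intro T
  obtain ⟨n, hn⟩ := T.exists_nat_subset_range
  calc ∑ d ∈ T, ENNReal.ofReal (((R:ℝ) + 1 + (d:ℝ)) ^ (-s))
      ≤ ∑ d ∈ Finset.range n, ENNReal.ofReal (((R:ℝ) + 1 + (d:ℝ)) ^ (-s)) :=
        Finset.sum_le_sum_of_subset hn
    _ ≤ ∑ d ∈ Finset.range n, ENNReal.ofReal (f d - f (d+1)) := by
        apply Finset.sum_le_sum
        intro d _
        exact ENNReal.ofReal_le_ofReal (hterm d)
    _ = ENNReal.ofReal (∑ d ∈ Finset.range n, (f d - f (d+1))) :=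
        (ENNReal.ofReal_sum_of_nonneg (fun d _ => hnn d)).symm
    _ ≤ ENNReal.ofReal (1/(R:ℝ)) := by
        apply ENNReal.ofReal_le_ofReal
        rw [Finset.sum_range_sub' f n]
        have h0 : f 0 = 1/(R:ℝ) := by simp [hf]
        have h1 : 0 ≤ f n := by
          simp only [hf]
          positivity
        linarith

end aux

set_option maxHeartbeats 1000000 in
/-- Long-range percolation on ℤ with edge probabilities `|i-j|^{-s}`,
`s > 2`: for every `α > 0` there exists `M₀` (depending on `s` and `α`) such that for all
`M ≥ M₀`, `P(N_M ≥ 2 M^{1+α}) ≤ M^{-(1 + 3α/2)}`. -/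
theorem edgeCountBox_deviation
    (s : ℝ) (hs : 2 < s)
    {Ω : Type*} [MeasurableSpace Ω] (P : Measure Ω) [IsProbabilityMeasure P]
    (E : ℤ → ℤ → Set Ω)
    (hmeas : ∀ i j : ℤ, MeasurableSet (E i j))
    (hindep : iIndepSet (fun q : {q : ℤ × ℤ // q.1 < q.2} => E q.1.1 q.1.2) P)
    (hprob : ∀ i j : ℤ, i < j → P (E i j) = ENNReal.ofReal ((|(i : ℝ) - j|) ^ (-s))) :
    ∀ α : ℝ, 0 < α → ∃ M₀ : ℕ, ∀ M : ℕ, M₀ ≤ M →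
      P {ω | ENNReal.ofReal (2 * (M : ℝ) ^ (1 + α)) ≤ ((edgeCountBox E M ω : ℝ≥0∞))}
        ≤ ENNReal.ofReal ((M : ℝ) ^ (-(1 + 3 * α / 2))) := by
  classical
  intro α hα
  have hα2 : 0 < α / 2 := by positivity
  have hev : ∀ᶠ M : ℕ in Filter.atTop, (4:ℝ) ≤ (M:ℝ) ^ (α/2) := by
    have h := (tendsto_rpow_atTop hα2).comp
      (tendsto_natCast_atTop_atTop (R := ℝ))
    exact h.eventually_ge_atTop 4
  obtain ⟨M₀, hM₀⟩ := Filter.eventually_atTop.mp (hev.and (Filter.eventually_ge_atTop 2))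
  refine ⟨M₀, fun M hM => ?_⟩
  obtain ⟨hM4, hM2⟩ := hM₀ M hM
  have hMR : (2:ℝ) ≤ (M:ℝ) := by exact_mod_cast hM2
  have hM1 : (1:ℝ) ≤ (M:ℝ) := by linarith
  have hMpos : (0:ℝ) < (M:ℝ) := by linarith
  have hMα : (2:ℝ) ≤ (M:ℝ) ^ α := by
    have h1 : (M:ℝ) ^ α = (M:ℝ) ^ (α/2) * (M:ℝ) ^ (α/2) := by
      rw [← Real.rpow_add hMpos]; ring_nf
    have h2 : (0:ℝ) < (M:ℝ) ^ (α/2) := Real.rpow_pos_of_pos hMpos _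
    nlinarith
  -- the cutoff R
  set k : ℕ := 3 + Nat.ceil (3*α/2) with hk
  set R : ℕ := M ^ k with hRdef
  have hR1 : 1 ≤ R := Nat.one_le_pow _ _ (by omega)
  have hRr1 : (1:ℝ) ≤ (R:ℝ) := by exact_mod_cast hR1
  have hRge : 2 * (M:ℝ) ^ (2 + 3*α/2) ≤ (R:ℝ) := by
    have h1 : ((R:ℕ):ℝ) = (M:ℝ) ^ (k:ℝ) := by
      rw [hRdef]; push_cast; rw [← Real.rpow_natCast]
    have h2 : (3 + 3*α/2 : ℝ) ≤ (k:ℝ) := by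
      have hc := Nat.le_ceil (3*α/2)
      rw [hk]; push_cast; linarith
    have h3 : (M:ℝ) ^ (3 + 3*α/2 : ℝ) ≤ (M:ℝ) ^ (k:ℝ) :=
      Real.rpow_le_rpow_of_exponent_le hM1 h2
    have h4 : (M:ℝ) ^ (3 + 3*α/2 : ℝ) = (M:ℝ) * (M:ℝ) ^ (2 + 3*α/2 : ℝ) := by
      rw [show (3 + 3*α/2 : ℝ) = 1 + (2 + 3*α/2) by ring, Real.rpow_add hMpos,
        Real.rpow_one]
    have h5 : (0:ℝ) < (M:ℝ) ^ (2 + 3*α/2 : ℝ) := Real.rpow_pos_of_pos hMpos _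
    rw [h1]
    nlinarith
  -- the finite family of near pairs
  set e : ℤ × ℕ → ℤ × ℤ := fun p => (p.1, p.1 + (p.2:ℤ)) with he
  have hinj : Function.Injective e := by
    rintro ⟨x, d⟩ ⟨x', d'⟩ h
    simp only [he, Prod.mk.injEq] at h
    obtain ⟨h1, h2⟩ := h
    subst h1
    have : (d:ℤ) = (d':ℤ) := by omega
    exact Prod.ext rfl (by exact_mod_cast this)
  set F : Finset (ℤ × ℤ) :=
    ((Finset.Icc (1:ℤ) (M:ℤ)) ×ˢ (Finset.Icc 1 R)).image e with hFdef
  have hFmem : ∀ q : ℤ × ℤ, q ∈ F ↔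
      1 ≤ q.1 ∧ q.1 ≤ (M:ℤ) ∧ q.1 < q.2 ∧ q.2 ≤ q.1 + (R:ℤ) := by
    rintro ⟨a, b⟩
    simp only [hFdef, Finset.mem_image, Finset.mem_product, Finset.mem_Icc, he,
      Prod.mk.injEq, Prod.exists]
    constructor
    · rintro ⟨x, d, ⟨⟨hx1, hx2⟩, hd1, hd2⟩, rfl, rfl⟩
      refine ⟨hx1, hx2, by omega, by omega⟩
    · rintro ⟨h1, h2, h3, h4⟩
      refine ⟨a, (b - a).toNat, ⟨⟨h1, h2⟩, by omega, by omega⟩, rfl, by omega⟩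
  -- the indicator random variables
  set Y : {q : ℤ × ℤ // q.1 < q.2} → Ω → ℝ :=
    fun a => (E a.1.1 a.1.2).indicator (fun _ => (1:ℝ)) with hY
  have hYmem : ∀ a, MemLp (Y a) 2 P := fun a =>
    memLp_indicator_const 2 (hmeas _ _) 1 (Or.inr (measure_ne_top P _))
  have hYindep :
      iIndepFun Y P :=
    hindep.iIndepFun_indicator
  set FQ : Finset {q : ℤ × ℤ // q.1 < q.2} := F.subtype (fun q => q.1 < q.2) with hFQ
  set X : Ω → ℝ := ∑ a ∈ FQ, Y a with hX
  have hXmem : MemLp X 2 P := memLp_finsetSum' _ (fun a _ => hYmem a)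
  have hQsum : ∀ g : ℤ × ℤ → ℝ, ∑ a ∈ FQ, g a.1 = ∑ q ∈ F, g q := fun g =>
    Finset.sum_subtype_of_mem g (fun q hq => ((hFmem q).mp hq).2.2.1)
  have hEY : ∀ a, P[Y a] = (P (E a.1.1 a.1.2)).toReal := by
    intro a
    rw [hY]
    rw [integral_indicator_const (1:ℝ) (hmeas _ _)]
    simp [measureReal_def]
  have hVarY : ∀ a, variance (Y a) P ≤ (P (E a.1.1 a.1.2)).toReal := by
    intro a
    have hsq : (Y a) ^ 2 = Y a := by
      funext ω
      simp only [hY, Pi.pow_apply, Set.indicator_apply]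
      split_ifs <;> norm_num
    rw [variance_eq_sub (hYmem a), hsq, hEY a]
    have := sq_nonneg ((P (E a.1.1 a.1.2)).toReal)
    linarith
  have hPval : ∀ (x : ℤ) (d : ℕ), 1 ≤ d →
      (P (E x (x + (d:ℤ)))).toReal = ((d:ℝ)) ^ (-s) := by
    intro x d hd
    have hlt : x < x + (d:ℤ) := by omega
    rw [hprob x _ hlt, ENNReal.toReal_ofReal (Real.rpow_nonneg (abs_nonneg _) _)]
    congr 1
    have h1 : ((x:ℝ) - ((x + (d:ℤ) : ℤ) : ℝ)) = -(d:ℝ) := by push_cast; ring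
    rw [h1, abs_neg, abs_of_nonneg (by positivity)]
  have hSsum : ∑ q ∈ F, (P (E q.1 q.2)).toReal ≤ 2 * (M:ℝ) := by
    rw [hFdef, Finset.sum_image (fun p _ q _ h => hinj h), Finset.sum_product]
    have hrow : ∀ x ∈ Finset.Icc (1:ℤ) (M:ℤ),
        ∑ d ∈ Finset.Icc 1 R, (P (E (e (x, d)).1 (e (x, d)).2)).toReal ≤ 2 := by
      intro x _
      have hco : ∀ d ∈ Finset.Icc 1 R,
          (P (E (e (x, d)).1 (e (x, d)).2)).toReal = ((d:ℝ)) ^ (-s) := by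
        intro d hd
        simp only [he]
        exact hPval x d (Finset.mem_Icc.mp hd).1
      rw [Finset.sum_congr rfl hco]
      exact row_sum_le s hs R
    calc ∑ x ∈ Finset.Icc (1:ℤ) (M:ℤ), ∑ d ∈ Finset.Icc 1 R,
          (P (E (e (x, d)).1 (e (x, d)).2)).toReal
        ≤ ∑ _x ∈ Finset.Icc (1:ℤ) (M:ℤ), (2:ℝ) := Finset.sum_le_sum hrow
      _ = ((Finset.Icc (1:ℤ) (M:ℤ)).card : ℝ) * 2 := by
          rw [Finset.sum_const, nsmul_eq_mul]
      _ = 2 * (M:ℝ) := by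
          rw [Int.card_Icc]
          simp
          ring
  have hEX : P[X] = ∑ q ∈ F, (P (E q.1 q.2)).toReal := by
    rw [hX]
    have h0 : P[(∑ a ∈ FQ, Y a : Ω → ℝ)] = ∫ ω, ∑ a ∈ FQ, Y a ω ∂P := by
      congr 1
      funext ω
      simp [Finset.sum_apply]
    rw [h0, integral_finset_sum _ (fun a _ => (hYmem a).integrable one_le_two)]
    rw [Finset.sum_congr rfl (fun a _ => hEY a)]
    exact hQsum (fun q => (P (E q.1 q.2)).toReal)
  have hEXle : P[X] ≤ 2 * (M:ℝ) := by rw [hEX]; exact hSsum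
  have hEXnn : 0 ≤ P[X] := by
    rw [hEX]
    exact Finset.sum_nonneg (fun q _ => ENNReal.toReal_nonneg)
  have hVarX : variance X P ≤ 2 * (M:ℝ) := by
    rw [hX, IndepFun.variance_sum (fun a _ => hYmem a)
      (fun a _ b _ hab => hYindep.indepFun hab)]
    calc ∑ a ∈ FQ, variance (Y a) P
        ≤ ∑ a ∈ FQ, (P (E a.1.1 a.1.2)).toReal :=
          Finset.sum_le_sum (fun a _ => hVarY a)
      _ = ∑ q ∈ F, (P (E q.1 q.2)).toReal := hQsum (fun q => (P (E q.1 q.2)).toReal)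
      _ ≤ 2 * (M:ℝ) := hSsum
  have hVarXnn : 0 ≤ variance X P := variance_nonneg _ _
  -- Chebyshev
  set c : ℝ := (M:ℝ) ^ (1 + α) with hc
  have hcpos : 0 < c := Real.rpow_pos_of_pos hMpos _
  have hcheble : P {ω | c ≤ |X ω - P[X]|}
      ≤ ENNReal.ofReal (1/2 * (M:ℝ) ^ (-(1 + 3*α/2))) := by
    refine le_trans (meas_ge_le_variance_div_sq hXmem hcpos) (ENNReal.ofReal_le_ofReal ?_)
    have hc2 : c^2 = (M:ℝ) ^ ((2:ℝ) + 2*α) := by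
      rw [hc, sq, ← Real.rpow_add hMpos]
      ring_nf
    rw [div_le_iff₀ (by positivity)]
    have expand : 1/2 * (M:ℝ)^(-(1 + 3*α/2)) * c^2 = 1/2 * ((M:ℝ) * (M:ℝ)^(α/2)) := by
      rw [hc2, mul_assoc, ← Real.rpow_add hMpos,
        show (-(1 + 3*α/2) + ((2:ℝ) + 2*α)) = 1 + α/2 by ring,
        Real.rpow_add hMpos, Real.rpow_one]
    rw [expand]
    nlinarith [mul_nonneg hMpos.le (show (0:ℝ) ≤ (M:ℝ)^(α/2) - 4 by linarith)]
  -- far edges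
  set U : Set Ω := ⋃ x ∈ Finset.Icc (1:ℤ) (M:ℤ), ⋃ d : ℕ,
    E x (x + (R:ℤ) + 1 + (d:ℤ)) with hU
  have hUle : P U ≤ ENNReal.ofReal (1/2 * (M:ℝ) ^ (-(1 + 3*α/2))) := by
    have hTpos : (0:ℝ) < (M:ℝ) ^ ((2:ℝ) + 3*α/2) := Real.rpow_pos_of_pos hMpos _
    have hsplit : (M:ℝ) ^ (-(1 + 3*α/2)) = (M:ℝ) / (M:ℝ) ^ ((2:ℝ) + 3*α/2) := by
      rw [eq_div_iff hTpos.ne', ← Real.rpow_add hMpos,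
        show (-(1 + 3*α/2) + ((2:ℝ) + 3*α/2)) = 1 by ring, Real.rpow_one]
    calc P U ≤ ∑ x ∈ Finset.Icc (1:ℤ) (M:ℤ),
          P (⋃ d : ℕ, E x (x + (R:ℤ) + 1 + (d:ℤ))) := by
          rw [hU]; exact measure_biUnion_finset_le _ _
      _ ≤ ∑ x ∈ Finset.Icc (1:ℤ) (M:ℤ), ∑' d : ℕ, P (E x (x + (R:ℤ) + 1 + (d:ℤ))) :=
          Finset.sum_le_sum (fun x _ => measure_iUnion_le _)
      _ ≤ ∑ _x ∈ Finset.Icc (1:ℤ) (M:ℤ), ENNReal.ofReal (1/(R:ℝ)) := by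
          apply Finset.sum_le_sum
          intro x _
          have heq : ∀ d : ℕ, P (E x (x + (R:ℤ) + 1 + (d:ℤ)))
              = ENNReal.ofReal (((R:ℝ) + 1 + (d:ℝ)) ^ (-s)) := by
            intro d
            rw [hprob _ _ (by omega)]
            congr 1
            have habs : |(x:ℝ) - ((x + (R:ℤ) + 1 + (d:ℤ) : ℤ) : ℝ)| = (R:ℝ) + 1 + (d:ℝ) := by
              push_cast
              rw [show ((x:ℝ) - ((x:ℝ) + (R:ℝ) + 1 + (d:ℝ))) = -((R:ℝ)+1+(d:ℝ)) by ring,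
                abs_neg, abs_of_nonneg (by positivity)]
            rw [habs]
          rw [tsum_congr heq]
          exact tail_sum_le s hs R hR1
      _ = ((Finset.Icc (1:ℤ) (M:ℤ)).card) • ENNReal.ofReal (1/(R:ℝ)) := Finset.sum_const _
      _ ≤ ENNReal.ofReal (1/2 * (M:ℝ) ^ (-(1 + 3*α/2))) := by
          have hcard : ((Finset.Icc (1:ℤ) (M:ℤ)).card) = M := by
            rw [Int.card_Icc]; simp
          rw [hcard, nsmul_eq_mul, ← ENNReal.ofReal_natCast M,
            ← ENNReal.ofReal_mul (Nat.cast_nonneg M)]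
          apply ENNReal.ofReal_le_ofReal
          have h1 : (M:ℝ) * (1/(R:ℝ)) = (M:ℝ)/(R:ℝ) := by ring
          have h2 : (M:ℝ)/(R:ℝ) ≤ (M:ℝ)/(2 * (M:ℝ) ^ ((2:ℝ) + 3*α/2)) :=
            div_le_div_of_nonneg_left hMpos.le (by positivity) hRge
          rw [h1, hsplit]
          calc (M:ℝ)/(R:ℝ) ≤ (M:ℝ)/(2 * (M:ℝ) ^ ((2:ℝ) + 3*α/2)) := h2
            _ = 1/2 * ((M:ℝ) / (M:ℝ) ^ ((2:ℝ) + 3*α/2)) := by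
                rw [div_mul_eq_div_div_swap]
                ring
  -- inclusion of events
  have h2M : 2 * (M:ℝ) ≤ c := by
    rw [hc, Real.rpow_add hMpos, Real.rpow_one]
    nlinarith
  have hsub : {ω | ENNReal.ofReal (2 * (M:ℝ) ^ (1 + α)) ≤ ((edgeCountBox E M ω : ℝ≥0∞))}
      ⊆ U ∪ {ω | c ≤ |X ω - P[X]|} := by
    intro ω hω
    by_cases hωU : ω ∈ U
    · exact Or.inl hωU
    right
    simp only [Set.mem_setOf_eq] at hω ⊢
    set Fω : Finset (ℤ × ℤ) := F.filter (fun q => ω ∈ E q.1 q.2) with hFω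
    have hSsub : {q : ℤ × ℤ | 1 ≤ q.1 ∧ q.1 ≤ (M:ℤ) ∧ q.1 < q.2 ∧ ω ∈ E q.1 q.2}
        ⊆ (↑Fω : Set (ℤ × ℤ)) := by
      rintro ⟨a, b⟩ ⟨h1, h2, h3, h4⟩
      by_cases hb : b ≤ a + (R:ℤ)
      · rw [Finset.mem_coe, hFω, Finset.mem_filter]
        exact ⟨(hFmem (a, b)).mpr ⟨h1, h2, h3, hb⟩, h4⟩
      · exfalso
        apply hωU
        rw [hU]
        refine Set.mem_iUnion₂.mpr ⟨a, Finset.mem_Icc.mpr ⟨h1, h2⟩, ?_⟩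
        refine Set.mem_iUnion.mpr ⟨(b - a - (R:ℤ) - 1).toNat, ?_⟩
        have hd : a + (R:ℤ) + 1 + ((b - a - (R:ℤ) - 1).toNat : ℤ) = b := by omega
        rw [hd]
        exact h4
    have hcard : ENNReal.ofReal (2 * (M:ℝ) ^ (1 + α)) ≤ (Fω.card : ℝ≥0∞) := by
      refine le_trans hω ?_
      have h1 : edgeCountBox E M ω ≤ (Fω.card : ℕ∞) := by
        rw [edgeCountBox]
        calc Set.encard {q : ℤ × ℤ | 1 ≤ q.1 ∧ q.1 ≤ (M:ℤ) ∧ q.1 < q.2 ∧ ω ∈ E q.1 q.2}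
            ≤ Set.encard (↑Fω : Set (ℤ × ℤ)) := Set.encard_mono hSsub
          _ = (Fω.card : ℕ∞) := Set.encard_coe_eq_coe_finsetCard _
      calc ((edgeCountBox E M ω : ℝ≥0∞)) ≤ (((Fω.card : ℕ∞)) : ℝ≥0∞) :=
            ENat.toENNReal_le.mpr h1
        _ = (Fω.card : ℝ≥0∞) := by simp
    have hcardR : 2 * (M:ℝ) ^ (1 + α) ≤ (Fω.card : ℝ) := by
      rw [← ENNReal.ofReal_natCast] at hcard
      exact (ENNReal.ofReal_le_ofReal_iff (Nat.cast_nonneg _)).mp hcard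
    have hXω : X ω = (Fω.card : ℝ) := by
      have h1 : X ω = ∑ a ∈ FQ, Y a ω := by rw [hX]; simp [Finset.sum_apply]
      have h2 : ∑ a ∈ FQ, Y a ω
          = ∑ q ∈ F, (E q.1 q.2).indicator (fun _ => (1:ℝ)) ω :=
        hQsum (fun q => (E q.1 q.2).indicator (fun _ => (1:ℝ)) ω)
      rw [h1, h2]
      simp only [Set.indicator_apply]
      rw [Finset.sum_boole]
    have hfin : c ≤ X ω - P[X] := by
      rw [hXω, hc]
      have : 2 * (M:ℝ) ^ (1 + α) - (M:ℝ) ^ (1 + α) = (M:ℝ) ^ (1 + α) := by ring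
      have h2Mc : P[X] ≤ (M:ℝ) ^ (1 + α) := le_trans hEXle h2M
      linarith
    exact le_trans hfin (le_abs_self _)
  -- combine
  calc P {ω | ENNReal.ofReal (2 * (M:ℝ) ^ (1 + α)) ≤ ((edgeCountBox E M ω : ℝ≥0∞))}
      ≤ P (U ∪ {ω | c ≤ |X ω - P[X]|}) := measure_mono hsub
    _ ≤ P U + P {ω | c ≤ |X ω - P[X]|} := measure_union_le _ _
    _ ≤ ENNReal.ofReal (1/2 * (M:ℝ) ^ (-(1 + 3*α/2)))
        + ENNReal.ofReal (1/2 * (M:ℝ) ^ (-(1 + 3*α/2))) := add_le_add hUle hcheble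
    _ = ENNReal.ofReal ((M:ℝ) ^ (-(1 + 3*α/2))) := by
        rw [← ENNReal.ofReal_add (by positivity) (by positivity)]
        congr 1
        ring
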